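/- arXiv:1803.04522 — 2 statements merged into one kernel-verified Lean document; each statement's English description precedes it below -/
import Mathlib

section
/- For real k and angles θ₁, θ₂ with |c₁c₂ cos k + s₁s₂| ≤ 1, the eigenvalues of Û₁(k)Û₂(k) are λ_j(k) = c₁c₂ cos k + s₁s₂ - i(-1)^j √(1 - (c₁c₂ cos k + s₁s₂)²) for j = 1, 2, where cⱼ = cos θⱼ, sⱼ = sin θⱼ; in particular λ₁(k)·λ₂(k) = 1 and λ₂(k) is the complex conjugate of λ₁(k). -/
noncomputable def Ucoin (θ : ℝ) : Matrix (Fin 2) (Fin 2) ℂ :=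
  !![(Real.cos θ : ℂ), (Real.sin θ : ℂ); (Real.sin θ : ℂ), -(Real.cos θ : ℂ)]

noncomputable def Dmat (k : ℝ) : Matrix (Fin 2) (Fin 2) ℂ :=
  !![Complex.exp ((k : ℂ) / 2 * Complex.I), 0; 0, Complex.exp (-((k : ℂ) / 2) * Complex.I)]

noncomputable def hatU (θ k : ℝ) : Matrix (Fin 2) (Fin 2) ℂ := Dmat k * Ucoin θ

/-- `A(k) = c₁c₂ cos k + s₁s₂`. -/
noncomputable def Aval (θ₁ θ₂ k : ℝ) : ℝ :=
  Real.cos θ₁ * Real.cos θ₂ * Real.cos k + Real.sin θ₁ * Real.sin θ₂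

/-- `λ_j(k) = A(k) - i (-1)^j √(1 - A(k)²)`. -/
noncomputable def lam (θ₁ θ₂ k : ℝ) (j : ℕ) : ℂ :=
  (Aval θ₁ θ₂ k : ℂ) - Complex.I * (-1 : ℂ) ^ j * (Real.sqrt (1 - (Aval θ₁ θ₂ k) ^ 2) : ℂ)

lemma det_aux (k θ₁ θ₂ : ℝ) (z : ℂ) :
    (algebraMap ℂ (Matrix (Fin 2) (Fin 2) ℂ) z - hatU θ₁ k * hatU θ₂ k).det
      = z ^ 2 - 2 * (Aval θ₁ θ₂ k : ℂ) * z + 1 := by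
  have hEF : Complex.exp ((k : ℂ) / 2 * Complex.I) * Complex.exp (-((k : ℂ) / 2 * Complex.I)) = 1 := by
    rw [← Complex.exp_add]; ring_nf; exact Complex.exp_zero
  have hE2 : Complex.exp ((k : ℂ) / 2 * Complex.I) ^ 2 + Complex.exp (-((k : ℂ) / 2 * Complex.I)) ^ 2
      = 2 * Complex.cos k := by
    rw [sq, sq, ← Complex.exp_add, ← Complex.exp_add, Complex.cos]; ring_nf
  have hP1 : Complex.sin θ₁ ^ 2 + Complex.cos θ₁ ^ 2 = 1 := Complex.sin_sq_add_cos_sq _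
  have hP2 : Complex.sin θ₂ ^ 2 + Complex.cos θ₂ ^ 2 = 1 := Complex.sin_sq_add_cos_sq _
  simp [hatU, Dmat, Ucoin, Matrix.mul_fin_two, Matrix.det_fin_two, Matrix.algebraMap_eq_diagonal,
    Matrix.sub_apply, Matrix.diagonal_apply, Aval]
  linear_combination (-z * Complex.cos θ₁ * Complex.cos θ₂) * hE2 +
    (-2 * z * Complex.sin θ₁ * Complex.sin θ₂ +
      (Complex.exp ((k : ℂ) / 2 * Complex.I) * Complex.exp (-((k : ℂ) / 2 * Complex.I)) + 1) *
        (Complex.sin θ₁ ^ 2 + Complex.cos θ₁ ^ 2) * (Complex.sin θ₂ ^ 2 + Complex.cos θ₂ ^ 2)) * hEF +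
    (Complex.sin θ₂ ^ 2 + Complex.cos θ₂ ^ 2) * hP1 + hP2

theorem stmt_3 (k θ₁ θ₂ : ℝ) (h : |Aval θ₁ θ₂ k| ≤ 1) :
    spectrum ℂ (hatU θ₁ k * hatU θ₂ k) = {lam θ₁ θ₂ k 1, lam θ₁ θ₂ k 2} ∧
    lam θ₁ θ₂ k 1 * lam θ₁ θ₂ k 2 = 1 ∧
    lam θ₁ θ₂ k 2 = starRingEnd ℂ (lam θ₁ θ₂ k 1) := by
  set A := Aval θ₁ θ₂ k with hA
  have hA2 : A ^ 2 ≤ 1 := by nlinarith [abs_nonneg A, sq_abs A, abs_le.mp h]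
  have hs : (Real.sqrt (1 - A ^ 2) : ℂ) ^ 2 = 1 - (A : ℂ) ^ 2 := by
    rw [← Complex.ofReal_pow, Real.sq_sqrt (by linarith)]
    push_cast; ring
  have hprod : lam θ₁ θ₂ k 1 * lam θ₁ θ₂ k 2 = 1 := by
    simp only [lam, ← hA]
    have hI : Complex.I ^ 2 = -1 := Complex.I_sq
    linear_combination (-Complex.I ^ 2) * hs + ((A:ℂ)^2 - 1) * hI
  refine ⟨?_, hprod, ?_⟩
  · ext z
    rw [spectrum.mem_iff, Matrix.isUnit_iff_isUnit_det, isUnit_iff_ne_zero, not_not, det_aux,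
      show z ^ 2 - 2 * (A : ℂ) * z + 1 = (z - lam θ₁ θ₂ k 1) * (z - lam θ₁ θ₂ k 2) by
        have h12 : lam θ₁ θ₂ k 1 + lam θ₁ θ₂ k 2 = 2 * (A : ℂ) := by simp [lam, ← hA]; ring
        linear_combination z * h12 - hprod,
      mul_eq_zero, sub_eq_zero, sub_eq_zero]
    simp [Set.mem_insert_iff]
  · simp only [lam, ← hA]
    simp [Complex.conj_ofReal]
    ring
end

section
/- u_j(k) is an eigenvector of Û₁(k)Û₂(k) with eigenvalue λ_j(k): explicitly, Û₁(k)Û₂(k)·v = λ_j(k)·v where v = [ c₁s₂ e^{ik} - s₁c₂, i(-c₁c₂ sin k - (-1)^j √(1-A²)) ]ᵀ, λ_j(k) = A - i(-1)^j√(1-A²), A = c₁c₂ cos k + s₁s₂. -/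
/-- The (unnormalized) eigenvector `v`. -/
noncomputable def evec (θ₁ θ₂ k : ℝ) (j : ℕ) : Fin 2 → ℂ :=
  ![(Real.cos θ₁ * Real.sin θ₂ : ℝ) * Complex.exp ((k : ℂ) * Complex.I)
      - ((Real.sin θ₁ * Real.cos θ₂ : ℝ) : ℂ),
    Complex.I * ((-(Real.cos θ₁ * Real.cos θ₂ * Real.sin k)
      - (-1 : ℝ) ^ j * Real.sqrt (1 - (Aval θ₁ θ₂ k) ^ 2) : ℝ) : ℂ)]

theorem stmt_11 (θ₁ θ₂ k : ℝ) (h : (Aval θ₁ θ₂ k) ^ 2 ≤ 1)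
    (j : ℕ) (hj : j = 1 ∨ j = 2) :
    (hatU θ₁ k * hatU θ₂ k).mulVec (evec θ₁ θ₂ k j) = lam θ₁ θ₂ k j • evec θ₁ θ₂ k j := by
  have hI : Complex.I ^ 2 = -1 := Complex.I_sq
  have hEF : Complex.exp ((k:ℂ)/2*Complex.I) * Complex.exp (-((k:ℂ)/2*Complex.I)) = 1 := by
    rw [← Complex.exp_add]; ring_nf; exact Complex.exp_zero
  have hkE : Complex.exp ((k:ℂ) * Complex.I) = (Complex.exp ((k:ℂ)/2*Complex.I)) ^ 2 := by
    rw [sq, ← Complex.exp_add]; ring_nf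
  have hexpk : Complex.exp ((k:ℂ) * Complex.I) = Complex.cos (k:ℂ) + Complex.sin (k:ℂ) * Complex.I :=
    Complex.exp_mul_I _
  have hE2 : (Complex.exp ((k:ℂ)/2*Complex.I)) ^ 2 = Complex.cos (k:ℂ) + Complex.sin (k:ℂ) * Complex.I := by
    rw [← hkE]; exact hexpk
  have hF2 : (Complex.exp (-((k:ℂ)/2*Complex.I))) ^ 2 = Complex.cos (k:ℂ) - Complex.sin (k:ℂ) * Complex.I := by
    rw [sq, ← Complex.exp_add, show -((k:ℂ)/2*Complex.I) + -((k:ℂ)/2*Complex.I) = -(k:ℂ) * Complex.I by ring,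
      Complex.exp_mul_I, Complex.cos_neg, Complex.sin_neg]; ring
  have h1 : Complex.sin (θ₁:ℂ) ^ 2 = 1 - Complex.cos (θ₁:ℂ) ^ 2 := by
    linear_combination Complex.sin_sq_add_cos_sq (θ₁:ℂ)
  have h2 : Complex.sin (θ₂:ℂ) ^ 2 = 1 - Complex.cos (θ₂:ℂ) ^ 2 := by
    linear_combination Complex.sin_sq_add_cos_sq (θ₂:ℂ)
  have h3 : Complex.sin (k:ℂ) ^ 2 = 1 - Complex.cos (k:ℂ) ^ 2 := by
    linear_combination Complex.sin_sq_add_cos_sq (k:ℂ)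
  have hA : ((Aval θ₁ θ₂ k : ℝ) : ℂ) = Complex.cos (θ₁:ℂ) * Complex.cos (θ₂:ℂ) * Complex.cos (k:ℂ)
      + Complex.sin (θ₁:ℂ) * Complex.sin (θ₂:ℂ) := by
    rw [Aval]; push_cast; ring
  have hq : ((Real.sqrt (1 - (Aval θ₁ θ₂ k)^2) : ℝ) : ℂ) ^ 2 =
      1 - (Complex.cos (θ₁:ℂ) * Complex.cos (θ₂:ℂ) * Complex.cos (k:ℂ)
        + Complex.sin (θ₁:ℂ) * Complex.sin (θ₂:ℂ)) ^ 2 := by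
    rw [← Complex.ofReal_pow, Real.sq_sqrt (by linarith), ← hA]; push_cast; ring
  funext i
  rcases hj with rfl | rfl <;> fin_cases i <;>
    simp [hatU, Dmat, Ucoin, evec, lam, Matrix.mulVec, Matrix.mul_apply,
      dotProduct, Fin.sum_univ_two]
  · linear_combination ((-1)*((Aval θ₁ θ₂ k : ℝ) : ℂ)*(Complex.cos (θ₁:ℂ))*(Complex.sin (θ₂:ℂ)) + (Complex.exp ((k:ℂ)/2*Complex.I))*(Complex.exp (-((k:ℂ)/2*Complex.I)))*(Complex.cos (θ₁:ℂ))*(Complex.sin (θ₁:ℂ))*(Complex.sin (θ₂:ℂ))^2 + (Complex.exp ((k:ℂ)/2*Complex.I))^2*(Complex.cos (θ₁:ℂ))^2*(Complex.cos (θ₂:ℂ))*(Complex.sin (θ₂:ℂ)) + (-1)*Complex.I*(Complex.cos (θ₁:ℂ))*(Complex.sin (θ₂:ℂ))*((Real.sqrt (1 - (Aval θ₁ θ₂ k)^2) : ℝ) : ℂ)) * hkE +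
        ((Complex.sin (θ₁:ℂ))*(Complex.cos (θ₂:ℂ)) + (-1)*(Complex.exp ((k:ℂ)/2*Complex.I))^2*(Complex.cos (θ₁:ℂ))*(Complex.sin (θ₂:ℂ))) * hA +
        ((-1)*(Complex.sin (θ₁:ℂ))^2*(Complex.cos (θ₂:ℂ))*(Complex.sin (θ₂:ℂ)) + (Complex.exp ((k:ℂ)/2*Complex.I))^2*(Complex.cos (θ₁:ℂ))*(Complex.sin (θ₁:ℂ))*(Complex.sin (θ₂:ℂ))^2 + (-1)*Complex.I*(Complex.sin (θ₁:ℂ))*(Complex.cos (θ₂:ℂ))*((Real.sqrt (1 - (Aval θ₁ θ₂ k)^2) : ℝ) : ℂ) + Complex.I*(Complex.cos (θ₁:ℂ))*(Complex.sin (θ₁:ℂ))*(Complex.cos (θ₂:ℂ))^2*(Complex.sin (k:ℂ))) * hEF +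
        ((-1)*(Complex.cos (θ₁:ℂ))*(Complex.sin (θ₁:ℂ))*(Complex.cos (θ₂:ℂ))^2 + (Complex.exp ((k:ℂ)/2*Complex.I))^2*(Complex.cos (θ₁:ℂ))^2*(Complex.cos (θ₂:ℂ))*(Complex.sin (θ₂:ℂ))) * hE2
  · linear_combination ((-1)*(Complex.exp (-((k:ℂ)/2*Complex.I)))^2*(Complex.cos (θ₁:ℂ))^2*(Complex.sin (θ₂:ℂ))^2 + (Complex.exp ((k:ℂ)/2*Complex.I))*(Complex.exp (-((k:ℂ)/2*Complex.I)))*(Complex.cos (θ₁:ℂ))*(Complex.sin (θ₁:ℂ))*(Complex.cos (θ₂:ℂ))*(Complex.sin (θ₂:ℂ))) * hkE +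
        ((-1)*Complex.I*((Real.sqrt (1 - (Aval θ₁ θ₂ k)^2) : ℝ) : ℂ) + Complex.I*(Complex.cos (θ₁:ℂ))*(Complex.cos (θ₂:ℂ))*(Complex.sin (k:ℂ))) * hA +
        ((-1)*((Real.sqrt (1 - (Aval θ₁ θ₂ k)^2) : ℝ) : ℂ)^2 + (Complex.cos (θ₁:ℂ))^2*(Complex.cos (θ₂:ℂ))^2*(Complex.sin (k:ℂ))^2) * hI +
        ((-1)*(Complex.sin (θ₁:ℂ))^2*(Complex.cos (θ₂:ℂ))^2 + (-1)*(Complex.cos (θ₁:ℂ))^2*(Complex.sin (θ₂:ℂ))^2 + (-1)*(Complex.exp ((k:ℂ)/2*Complex.I))*(Complex.exp (-((k:ℂ)/2*Complex.I)))*(Complex.cos (θ₁:ℂ))^2*(Complex.sin (θ₂:ℂ))^2 + (Complex.exp ((k:ℂ)/2*Complex.I))^2*(Complex.cos (θ₁:ℂ))*(Complex.sin (θ₁:ℂ))*(Complex.cos (θ₂:ℂ))*(Complex.sin (θ₂:ℂ)) + Complex.I*(Complex.sin (θ₁:ℂ))*(Complex.sin (θ₂:ℂ))*((Real.sqrt (1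 - (Aval θ₁ θ₂ k)^2) : ℝ) : ℂ) + (-1)*Complex.I*(Complex.cos (θ₁:ℂ))*(Complex.sin (θ₁:ℂ))*(Complex.cos (θ₂:ℂ))*(Complex.sin (θ₂:ℂ))*(Complex.sin (k:ℂ))) * hEF +
        ((Complex.cos (θ₁:ℂ))*(Complex.sin (θ₁:ℂ))*(Complex.cos (θ₂:ℂ))*(Complex.sin (θ₂:ℂ))) * hE2 +
        ((Complex.cos (θ₁:ℂ))*(Complex.sin (θ₁:ℂ))*(Complex.cos (θ₂:ℂ))*(Complex.sin (θ₂:ℂ)) + Complex.I*(Complex.cos (θ₁:ℂ))*(Complex.cos (θ₂:ℂ))*((Real.sqrt (1 - (Aval θ₁ θ₂ k)^2) : ℝ) : ℂ) + (-1)*Complex.I*(Complex.cos (θ₁:ℂ))^2*(Complex.cos (θ₂:ℂ))^2*(Complex.sin (k:ℂ))) * hF2 +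
        ((1)) * hq +
        ((-1)*(Complex.sin (θ₂:ℂ))^2 + (-1)*(Complex.cos (θ₂:ℂ))^2) * h1 +
        ((-1)) * h2 +
        ((-1)*(Complex.cos (θ₁:ℂ))^2*(Complex.cos (θ₂:ℂ))^2) * h3
  · linear_combination ((-1)*((Aval θ₁ θ₂ k : ℝ) : ℂ)*(Complex.cos (θ₁:ℂ))*(Complex.sin (θ₂:ℂ)) + (Complex.exp ((k:ℂ)/2*Complex.I))*(Complex.exp (-((k:ℂ)/2*Complex.I)))*(Complex.cos (θ₁:ℂ))*(Complex.sin (θ₁:ℂ))*(Complex.sin (θ₂:ℂ))^2 + (Complex.exp ((k:ℂ)/2*Complex.I))^2*(Complex.cos (θ₁:ℂ))^2*(Complex.cos (θ₂:ℂ))*(Complex.sin (θ₂:ℂ)) + Complex.I*(Complex.cos (θ₁:ℂ))*(Complex.sin (θ₂:ℂ))*((Real.sqrt (1 - (Aval θ₁ θ₂ k)^2) : ℝ) : ℂ)) * hkE +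
        ((Complex.sin (θ₁:ℂ))*(Complex.cos (θ₂:ℂ)) + (-1)*(Complex.exp ((k:ℂ)/2*Complex.I))^2*(Complex.cos (θ₁:ℂ))*(Complex.sin (θ₂:ℂ))) * hA +
        ((-1)*(Complex.sin (θ₁:ℂ))^2*(Complex.cos (θ₂:ℂ))*(Complex.sin (θ₂:ℂ)) + (Complex.exp ((k:ℂ)/2*Complex.I))^2*(Complex.cos (θ₁:ℂ))*(Complex.sin (θ₁:ℂ))*(Complex.sin (θ₂:ℂ))^2 + Complex.I*(Complex.sin (θ₁:ℂ))*(Complex.cos (θ₂:ℂ))*((Real.sqrt (1 - (Aval θ₁ θ₂ k)^2) : ℝ) : ℂ) + Complex.I*(Complex.cos (θ₁:ℂ))*(Complex.sin (θ₁:ℂ))*(Complex.cos (θ₂:ℂ))^2*(Complex.sin (k:ℂ))) * hEF +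
        ((-1)*(Complex.cos (θ₁:ℂ))*(Complex.sin (θ₁:ℂ))*(Complex.cos (θ₂:ℂ))^2 + (Complex.exp ((k:ℂ)/2*Complex.I))^2*(Complex.cos (θ₁:ℂ))^2*(Complex.cos (θ₂:ℂ))*(Complex.sin (θ₂:ℂ))) * hE2
  · linear_combination ((-1)*(Complex.exp (-((k:ℂ)/2*Complex.I)))^2*(Complex.cos (θ₁:ℂ))^2*(Complex.sin (θ₂:ℂ))^2 + (Complex.exp ((k:ℂ)/2*Complex.I))*(Complex.exp (-((k:ℂ)/2*Complex.I)))*(Complex.cos (θ₁:ℂ))*(Complex.sin (θ₁:ℂ))*(Complex.cos (θ₂:ℂ))*(Complex.sin (θ₂:ℂ))) * hkE +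
        (Complex.I*((Real.sqrt (1 - (Aval θ₁ θ₂ k)^2) : ℝ) : ℂ) + Complex.I*(Complex.cos (θ₁:ℂ))*(Complex.cos (θ₂:ℂ))*(Complex.sin (k:ℂ))) * hA +
        ((-1)*((Real.sqrt (1 - (Aval θ₁ θ₂ k)^2) : ℝ) : ℂ)^2 + (Complex.cos (θ₁:ℂ))^2*(Complex.cos (θ₂:ℂ))^2*(Complex.sin (k:ℂ))^2) * hI +
        ((-1)*(Complex.sin (θ₁:ℂ))^2*(Complex.cos (θ₂:ℂ))^2 + (-1)*(Complex.cos (θ₁:ℂ))^2*(Complex.sin (θ₂:ℂ))^2 + (-1)*(Complex.exp ((k:ℂ)/2*Complex.I))*(Complex.exp (-((k:ℂ)/2*Complex.I)))*(Complex.cos (θ₁:ℂ))^2*(Complex.sin (θ₂:ℂ))^2 + (Complex.exp ((k:ℂ)/2*Complex.I))^2*(Complex.cos (θ₁:ℂ))*(Complex.sin (θ₁:ℂ))*(Complex.cos (θ₂:ℂ))*(Complex.sin (θ₂:ℂ)) + (-1)*Complex.I*(Complex.sin (θ₁:ℂ))*(Complex.sin (θ₂:ℂ))*((Real.sqrt (1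 - (Aval θ₁ θ₂ k)^2) : ℝ) : ℂ) + (-1)*Complex.I*(Complex.cos (θ₁:ℂ))*(Complex.sin (θ₁:ℂ))*(Complex.cos (θ₂:ℂ))*(Complex.sin (θ₂:ℂ))*(Complex.sin (k:ℂ))) * hEF +
        ((Complex.cos (θ₁:ℂ))*(Complex.sin (θ₁:ℂ))*(Complex.cos (θ₂:ℂ))*(Complex.sin (θ₂:ℂ))) * hE2 +
        ((Complex.cos (θ₁:ℂ))*(Complex.sin (θ₁:ℂ))*(Complex.cos (θ₂:ℂ))*(Complex.sin (θ₂:ℂ)) + (-1)*Complex.I*(Complex.cos (θ₁:ℂ))*(Complex.cos (θ₂:ℂ))*((Real.sqrt (1 - (Aval θ₁ θ₂ k)^2) : ℝ) : ℂ) + (-1)*Complex.I*(Complex.cos (θ₁:ℂ))^2*(Complex.cos (θ₂:ℂ))^2*(Complex.sin (k:ℂ))) * hF2 +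
        ((1)) * hq +
        ((-1)*(Complex.sin (θ₂:ℂ))^2 + (-1)*(Complex.cos (θ₂:ℂ))^2) * h1 +
        ((-1)) * h2 +
        ((-1)*(Complex.cos (θ₁:ℂ))^2*(Complex.cos (θ₂:ℂ))^2) * h3
end
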